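/- For every finite simple graph $G$ on $n \ge 1$ vertices and every integer $k \ge 1$, $\nu(G, \mathcal{C}_k) \ge \nu(G, \mathcal{F}) - (k+1)^{-1}$, where $\nu(G,\Gamma) = N(G,\Gamma)/n$. That is, $N(G, \mathcal{C}_k) \ge N(G, \mathcal{F}) - n/(k+1)$. -/

import Mathlib

open SimpleGraph

/-- `N(G, 𝒞_k)`: the largest size of a vertex set `S` such that every connected component
of the induced subgraph `G[S]` has at most `k` vertices. -/
noncomputable def NC {V : Type*} [Fintype V] (G : SimpleGraph V) (k : ℕ) : ℕ :=
  sSup {m | ∃ S : Set V, m = S.ncard ∧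
    ∀ v : S, (((G.induce S).connectedComponentMk v).supp).ncard ≤ k}

/-- `N(G, ℱ)`: the largest size of a vertex set `S` such that the induced subgraph `G[S]`
is a forest (acyclic). -/
noncomputable def NF {V : Type*} [Fintype V] (G : SimpleGraph V) : ℕ :=
  sSup {m | ∃ S : Set V, m = S.ncard ∧ (G.induce S).IsAcyclic}

namespace NCNFAux

set_option linter.unusedSectionVars false
variable {V : Type*} [Fintype V]

/-- The graph `G` restricted to vertices in `S` (on the same vertex type). -/
def restrict (G : SimpleGraph V) (S : Set V) : SimpleGraph V where
  Adj x y := G.Adj x y ∧ x ∈ S ∧ y ∈ S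
  symm := ⟨fun _ _ ⟨h, hx, hy⟩ => ⟨h.symm, hy, hx⟩⟩
  loopless := ⟨fun x ⟨h, _, _⟩ => G.loopless.irrefl x h⟩

lemma restrict_mono (G : SimpleGraph V) {S' S : Set V} (h : S' ⊆ S) :
    restrict G S' ≤ restrict G S := fun _ _ ⟨ha, hx, hy⟩ => ⟨ha, h hx, h hy⟩

/-- The connected component of `v` in `restrict G S`, as a set of vertices of `V`. -/
def Rset (G : SimpleGraph V) (S : Set V) (v : V) : Set V :=
  {u | (restrict G S).Reachable v u}

lemma mem_rset_self (G : SimpleGraph V) (S : Set V) (v : V) : v ∈ Rset G S v :=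
  Reachable.refl v

lemma mem_S_of_reachable {G : SimpleGraph V} {S : Set V} :
    ∀ {a b : V}, (restrict G S).Walk a b → a ∈ S → b ∈ S := by
  intro a b p
  induction p with
  | nil => exact id
  | cons h _ ih => exact fun _ => ih h.2.2

lemma rset_subset {G : SimpleGraph V} {S : Set V} {v : V} (hv : v ∈ S) :
    Rset G S v ⊆ S := fun _ hu => hu.elim fun p => mem_S_of_reachable p hv

lemma rset_mono (G : SimpleGraph V) {S' S : Set V} (h : S' ⊆ S) (v : V) :
    Rset G S' v ⊆ Rset G S v := fun _ hu => hu.mono (restrict_mono G h)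

lemma rset_closed {G : SimpleGraph V} {S : Set V} {v y z : V} (hy : y ∈ Rset G S v)
    (h : (restrict G S).Adj y z) : z ∈ Rset G S v :=
  hy.trans h.reachable

lemma rset_eq_of_mem {G : SimpleGraph V} {S : Set V} {u v : V} (h : u ∈ Rset G S v) :
    Rset G S u = Rset G S v := by
  ext w
  exact ⟨fun hw => (h : (restrict G S).Reachable v u).trans hw,
    fun hw => (h : (restrict G S).Reachable v u).symm.trans hw⟩

lemma reachable_of_support_mem {G : SimpleGraph V} {Y X : Set V} :
    ∀ {a b : V} (p : (restrict G Y).Walk a b), (∀ c ∈ p.support, c ∈ X) →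
      (restrict G X).Reachable a b := by
  intro a b p
  induction p with
  | nil => exact fun _ => Reachable.refl _
  | @cons a c b h p ih =>
    intro hsup
    have ha : a ∈ X := hsup a (by simp)
    have hc : c ∈ X := hsup c (by simp)
    exact (Adj.reachable (G := restrict G X) ⟨h.1, ha, hc⟩).trans
      (ih fun d hd => hsup d (by simp [hd]))

lemma walk_support_mem_of_closed {G : SimpleGraph V} {Y X : Set V}
    (hcl : ∀ a ∈ X, ∀ b, (restrict G Y).Adj a b → b ∈ X) :
    ∀ {a b : V} (p : (restrict G Y).Walk a b), a ∈ X → ∀ c ∈ p.support, c ∈ X := by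
  intro a b p
  induction p with
  | nil => intro ha c hc; simp at hc; exact hc ▸ ha
  | @cons a d b h p ih =>
    intro ha c hc
    rcases List.mem_cons.mp (by simpa using hc) with h1 | h2
    · exact h1 ▸ ha
    · exact ih (hcl a ha d h) c h2

lemma closed_rset_eq {G : SimpleGraph V} {X Y : Set V} {w : V} (hXY : X ⊆ Y)
    (hcl : ∀ a ∈ X, ∀ b, (restrict G Y).Adj a b → b ∈ X) (hw : w ∈ X) :
    Rset G Y w = Rset G X w := by
  apply Set.Subset.antisymm
  · intro u hu
    obtain ⟨p⟩ := (hu : (restrict G Y).Reachable w u)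
    exact reachable_of_support_mem p (walk_support_mem_of_closed hcl p hw)
  · exact rset_mono G hXY w

/-- Reachability in `restrict G S` gives reachability in `G.induce S`. -/
lemma reachable_induce_of_restrict {G : SimpleGraph V} {S : Set V} :
    ∀ {a b : V} (_ : (restrict G S).Walk a b) (ha : a ∈ S) (hb : b ∈ S),
      (G.induce S).Reachable ⟨a, ha⟩ ⟨b, hb⟩ := by
  intro a b p
  induction p with
  | nil => exact fun _ _ => Reachable.refl _
  | @cons a c b h p ih =>
    intro ha hb
    have hc : c ∈ S := h.2.2
    have hadj : (G.induce S).Adj ⟨a, ha⟩ ⟨c, hc⟩ := by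
      simp only [comap_adj, Function.Embedding.coe_subtype]
      exact h.1
    exact hadj.reachable.trans (ih hc hb)

/-- Reachability in `G.induce S` gives reachability in `restrict G S`. -/
lemma reachable_restrict_of_induce {G : SimpleGraph V} {S : Set V} {a b : ↥S}
    (h : (G.induce S).Reachable a b) : (restrict G S).Reachable ↑a ↑b := by
  let f : G.induce S →g restrict G S :=
    ⟨Subtype.val, fun {u w} huw => ⟨by simpa using huw, u.2, w.2⟩⟩
  exact h.map f

/-- Key acyclicity consequence: a vertex cannot have two distinct neighbors that remain
connected after deleting it. -/
lemma key {G : SimpleGraph V} {S₀ : Set V} (hac : (G.induce S₀).IsAcyclic)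
    {S : Set V} (hS : S ⊆ S₀) {v x y : V}
    (hx : (restrict G S).Adj v x) (hy : (restrict G S).Adj v y) (hxy : x ≠ y)
    (hr : (restrict G (S \ {v})).Reachable x y) : False := by
  classical
  have hvS₀ : v ∈ S₀ := hS hx.2.1
  have hxv : x ≠ v := fun h => (h ▸ hx.1.ne') rfl
  have hyv : y ≠ v := fun h => (h ▸ hy.1.ne') rfl
  have hxm : x ∈ S₀ \ {v} := ⟨hS hx.2.2, hxv⟩
  have hym : y ∈ S₀ \ {v} := ⟨hS hy.2.2, hyv⟩
  have hr' : (restrict G (S₀ \ {v})).Reachable x y :=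
    hr.mono (restrict_mono G (Set.diff_subset_diff_left hS))
  obtain ⟨p⟩ := reachable_induce_of_restrict
    (Classical.choice hr') hxm hym
  -- map into `G.induce S₀` via the inclusion embedding
  let ι := SimpleGraph.induceHomOfLE G (Set.diff_subset : S₀ \ {v} ⊆ S₀)
  let q : (G.induce S₀).Walk ⟨x, hS hx.2.2⟩ ⟨y, hS hy.2.2⟩ := p.map ι.toHom
  have hvq : (⟨v, hvS₀⟩ : ↥S₀) ∉ q.support := by
    intro hmem
    rw [show q.support = (p.map ι.toHom).support from rfl, Walk.support_map] at hmem
    obtain ⟨c, _, hc2⟩ := List.mem_map.mp hmem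
    have : (c : V) = v := congrArg Subtype.val hc2
    exact c.2.2 this
  -- the path obtained from q avoids v
  have hvq' : (⟨v, hvS₀⟩ : ↥S₀) ∉ (q.toPath.val).support :=
    fun hmem => hvq (Walk.support_toPath_subset q hmem)
  -- the explicit path x - v - y
  have hadj1 : (G.induce S₀).Adj ⟨x, hS hx.2.2⟩ ⟨v, hvS₀⟩ := by
    simp only [comap_adj, Function.Embedding.coe_subtype]; exact hx.1.symm
  have hadj2 : (G.induce S₀).Adj ⟨v, hvS₀⟩ ⟨y, hS hy.2.2⟩ := by
    simp only [comap_adj, Function.Embedding.coe_subtype]; exact hy.1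
  have hxy' : (⟨x, hS hx.2.2⟩ : ↥S₀) ≠ ⟨y, hS hy.2.2⟩ := fun h => hxy (congrArg Subtype.val h)
  let p2 : (G.induce S₀).Walk ⟨x, hS hx.2.2⟩ ⟨y, hS hy.2.2⟩ :=
    Walk.cons hadj1 (Walk.cons hadj2 Walk.nil)
  have hp2 : p2.IsPath := by
    rw [Walk.cons_isPath_iff]
    refine ⟨?_, ?_⟩
    · rw [Walk.cons_isPath_iff]
      exact ⟨Walk.IsPath.nil, by simp; exact fun h => hyv h.symm⟩
    · simp only [Walk.support_cons, Walk.support_nil, List.mem_cons]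
      push_neg
      exact ⟨hadj1.ne, hxy', by simp⟩
  have := isAcyclic_iff_path_unique.mp hac q.toPath ⟨p2, hp2⟩
  apply hvq'
  rw [this]
  simp [p2, Walk.support_cons]

/-- Claim C: in an acyclic situation, from any big component we can split off a chunk `B`
hanging at a cut vertex `u`. -/
lemma claimC {G : SimpleGraph V} {S₀ : Set V} (hac : (G.induce S₀).IsAcyclic) (k : ℕ) :
    ∀ m : ℕ, ∀ S : Set V, S ⊆ S₀ → ∀ v ∈ S, (Rset G S v).ncard = m →
      k + 1 ≤ (Rset G S v).ncard →
      ∃ u B, B ⊆ Rset G S v ∧ u ∈ B ∧ (v ∈ B → v = u) ∧ k + 1 ≤ B.ncard ∧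
        (∀ x ∈ B, x ≠ u → ∀ y, (restrict G S).Adj x y → y ∈ B) ∧
        (∀ x ∈ B, x ≠ u → (Rset G (S \ {u}) x).ncard ≤ k) := by
  classical
  intro m
  induction m using Nat.strong_induction_on with
  | _ m ih =>
  intro S hS v hv hm hk1
  by_cases hcase : ∀ x, (restrict G S).Adj v x → (Rset G (S \ {v}) x).ncard ≤ k
  · -- Case 1: u := v, B := the whole component
    refine ⟨v, Rset G S v, Set.Subset.rfl, mem_rset_self G S v, fun _ => rfl, hk1, ?_, ?_⟩
    · exact fun x hx _ y hadj => rset_closed hx hadj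
    · intro x hx hxv
      obtain ⟨p0⟩ := (hx : (restrict G S).Reachable v x)
      obtain ⟨w, hw⟩ := p0.toPath
      cases w with
      | nil => exact absurd rfl (Ne.symm hxv)
      | @cons _ c _ h q =>
        have hq : q.IsPath ∧ v ∉ q.support := by
          rw [Walk.cons_isPath_iff] at hw; exact hw
        have hsup : ∀ d ∈ q.support, d ∈ S \ {v} := by
          intro d hd
          refine ⟨?_, ?_⟩
          · exact mem_S_of_reachable (q.takeUntil d hd) h.2.2
          · exact fun hdv => hq.2 (hdv ▸ hd)
        have hreach : (restrict G (S \ {v})).Reachable c x :=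
          reachable_of_support_mem q hsup
        have := rset_eq_of_mem (G := G) (S := S \ {v}) (u := x) (v := c) hreach
        rw [this]
        exact hcase c h
  · -- Case 2: recurse into a big component of `S \ {v}`
    push_neg at hcase
    obtain ⟨x₀, hadj, hbig⟩ := hcase
    have hbig' : k + 1 ≤ (Rset G (S \ {v}) x₀).ncard := hbig
    have hx₀v : x₀ ≠ v := Ne.symm hadj.1.ne
    have hx₀S : x₀ ∈ S \ {v} := ⟨hadj.2.2, hx₀v⟩
    have hsubset : Rset G (S \ {v}) x₀ ⊆ Rset G S v := by
      intro u hu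
      exact (hadj.reachable).trans ((hu : (restrict G (S \ {v})).Reachable x₀ u).mono
        (restrict_mono G Set.diff_subset))
    have hvnot : v ∉ Rset G (S \ {v}) x₀ := fun h => (rset_subset hx₀S h).2 rfl
    have hlt : (Rset G (S \ {v}) x₀).ncard < m := by
      rw [← hm]
      exact Set.ncard_lt_ncard
        ((Set.ssubset_iff_of_subset hsubset).mpr ⟨v, mem_rset_self G S v, hvnot⟩)
        (Set.toFinite _)
    obtain ⟨u, B, hBsub, huB, hx₀B, hBcard, hclosure, hcomp⟩ :=
      ih _ hlt (S \ {v}) (Set.diff_subset.trans hS) x₀ hx₀S rfl hbig'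
    have hBSv : B ⊆ S \ {v} := hBsub.trans (rset_subset hx₀S)
    -- no vertex of B other than u is adjacent to v
    have hnov : ∀ a ∈ B, a ≠ u → ¬ G.Adj v a := by
      intro a haB hau hva
      by_cases hax : a = x₀
      · exact hau (hax ▸ hx₀B (hax ▸ haB))
      · exact key hac hS ⟨hva, hv, (hBSv haB).1⟩ hadj (fun h => hax h) -- x := a, y := x₀
          ((hBsub haB : (restrict G (S \ {v})).Reachable x₀ a).symm)
    refine ⟨u, B, hBsub.trans hsubset, huB, ?_, hBcard, ?_, ?_⟩
    · exact fun hvB => absurd ((hBSv hvB).2) (by simp)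
    · intro x hxB hxu y hadjxy
      by_cases hyv : y = v
      · exact absurd (hyv ▸ hadjxy.1).symm (hnov x hxB hxu)
      · exact hclosure x hxB hxu y ⟨hadjxy.1, hBSv hxB, ⟨hadjxy.2.2, hyv⟩⟩
    · intro x hxB hxu
      have hXY : B \ {u} ⊆ S \ {u} := fun a ha => ⟨(hBSv ha.1).1, ha.2⟩
      have hcl : ∀ a ∈ B \ {u}, ∀ b, (restrict G (S \ {u})).Adj a b → b ∈ B \ {u} := by
        intro a ha b hab
        have hbu : b ≠ u := hab.2.2.2
        by_cases hbv : b = v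
        · exact absurd (hbv ▸ hab.1).symm (hnov a ha.1 ha.2)
        · have : (restrict G (S \ {v})).Adj a b :=
            ⟨hab.1, hBSv ha.1, ⟨hab.2.2.1, hbv⟩⟩
          exact ⟨hclosure a ha.1 ha.2 b this, hbu⟩
      have heq : Rset G (S \ {u}) x = Rset G (B \ {u}) x :=
        closed_rset_eq hXY hcl ⟨hxB, hxu⟩
      rw [heq]
      refine le_trans (Set.ncard_le_ncard (rset_mono G ?_ x) (Set.toFinite _))
        (hcomp x hxB hxu)
      exact fun a ha => ⟨hBSv ha.1, ha.2⟩

/-- Lemma D: from an acyclic induced subgraph on `S`, delete at most `|S|/(k+1)` vertices so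
that all remaining components have at most `k` vertices. -/
lemma lemD {G : SimpleGraph V} {S₀ : Set V} (hac : (G.induce S₀).IsAcyclic) (k : ℕ) :
    ∀ m : ℕ, ∀ S : Set V, S ⊆ S₀ → S.ncard = m →
      ∃ T ⊆ S, (k + 1) * (S.ncard - T.ncard) ≤ S.ncard ∧
        ∀ v ∈ T, (Rset G T v).ncard ≤ k := by
  intro m
  induction m using Nat.strong_induction_on with
  | _ m ih =>
  intro S hS hm
  by_cases hall : ∀ v ∈ S, (Rset G S v).ncard ≤ k
  · exact ⟨S, Set.Subset.rfl, by simp, hall⟩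
  · push_neg at hall
    obtain ⟨v, hv, hbig⟩ := hall
    have hbig' : k + 1 ≤ (Rset G S v).ncard := hbig
    obtain ⟨u, B, hBsub, huB, _, hBcard, hclosure, hcomp⟩ :=
      claimC hac k (Rset G S v).ncard S hS v hv rfl hbig'
    have hBS : B ⊆ S := hBsub.trans (rset_subset hv)
    have hBfin := Set.toFinite B
    have hBcard' : B.ncard ≤ S.ncard := Set.ncard_le_ncard hBS (Set.toFinite _)
    set S' := S \ B with hS'def
    have hS'card : S'.ncard = S.ncard - B.ncard := Set.ncard_diff hBS (Set.toFinite _)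
    have hS'lt : S'.ncard < m := by
      rw [← hm]; omega
    obtain ⟨T', hT'sub, hT'card, hT'comp⟩ :=
      ih S'.ncard hS'lt S' (Set.diff_subset.trans hS) rfl
    set T := T' ∪ (B \ {u}) with hTdef
    have hT'S' : T' ⊆ S' := hT'sub
    have hdisj : Disjoint T' (B \ {u}) := by
      refine Set.disjoint_left.mpr fun a ha hab => ?_
      exact (hT'S' ha).2 hab.1
    have hTS : T ⊆ S := by
      intro a ha
      rcases ha with h1 | h2
      · exact (hT'S' h1).1
      · exact hBS h2.1
    have hTcard : T.ncard = T'.ncard + (B.ncard - 1) := by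
      rw [hTdef, Set.ncard_union_eq hdisj (Set.toFinite _) (Set.toFinite _),
        Set.ncard_diff_singleton_of_mem huB]
    have hT'le : T'.ncard ≤ S'.ncard := Set.ncard_le_ncard hT'S' (Set.toFinite _)
    have hBone : 1 ≤ B.ncard := le_trans (by omega) hBcard
    refine ⟨T, hTS, ?_, ?_⟩
    · -- cardinality bound
      have heq : S.ncard - T.ncard = (S'.ncard - T'.ncard) + 1 := by omega
      rw [heq, mul_add, mul_one]
      have : (k + 1) ≤ B.ncard := hBcard
      omega
    · -- component bound
      intro w hw
      have hTSu : T ⊆ S \ {u} := by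
        intro a ha
        rcases ha with h1 | h2
        · exact ⟨(hT'S' h1).1, fun hau => (hT'S' h1).2 (hau ▸ huB)⟩
        · exact ⟨hBS h2.1, h2.2⟩
      rcases hw with h1 | h2
      · -- w ∈ T'
        have hcl : ∀ a ∈ T', ∀ b, (restrict G T).Adj a b → b ∈ T' := by
          intro a ha b hab
          rcases hab.2.2 with hb1 | hb2
          · exact hb1
          · exfalso
            have : (restrict G S).Adj b a := ⟨hab.1.symm, hBS hb2.1, hTS hab.2.1⟩
            exact (hT'S' ha).2 (hclosure b hb2.1 hb2.2 a this)
        have heq : Rset G T w = Rset G T' w :=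
          closed_rset_eq (Set.subset_union_left) hcl h1
        rw [heq]
        exact hT'comp w h1
      · -- w ∈ B \ {u}
        refine le_trans (Set.ncard_le_ncard (rset_mono G hTSu w) (Set.toFinite _)) ?_
        exact hcomp w h2.1 h2.2

lemma nc_nf_main {V : Type*} [Fintype V] (G : SimpleGraph V) {S : Set V}
    (hac : (G.induce S).IsAcyclic) (k : ℕ) :
    ∃ T ⊆ S, (k + 1) * (S.ncard - T.ncard) ≤ S.ncard ∧
      ∀ v : T, (((G.induce T).connectedComponentMk v).supp).ncard ≤ k := by
  obtain ⟨T, hTS, hcard, hcomp⟩ := lemD hac k S.ncard S Set.Subset.rfl rfl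
  refine ⟨T, hTS, hcard, ?_⟩
  intro v
  have himg : Subtype.val '' ((G.induce T).connectedComponentMk v).supp = Rset G T ↑v := by
    ext u
    constructor
    · rintro ⟨w, hw, rfl⟩
      rw [ConnectedComponent.mem_supp_iff, ConnectedComponent.eq] at hw
      exact reachable_restrict_of_induce hw.symm
    · intro hu
      have huT : u ∈ T := rset_subset v.2 hu
      refine ⟨⟨u, huT⟩, ?_, rfl⟩
      rw [ConnectedComponent.mem_supp_iff, ConnectedComponent.eq]
      obtain ⟨p⟩ := (hu : (restrict G T).Reachable ↑v u)
      exact (reachable_induce_of_restrict p v.2 huT).symm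
  have := hcomp ↑v v.2
  rw [← himg] at this
  rwa [Set.ncard_image_of_injective _ Subtype.val_injective] at this

end NCNFAux

open NCNFAux

/-- For every finite simple graph `G` on `n ≥ 1` vertices and every `k ≥ 1`,
`N(G, 𝒞_k) ≥ N(G, ℱ) - n/(k+1)`. -/
theorem NC_ge_NF_sub {V : Type*} [Fintype V] (G : SimpleGraph V)
    (n : ℕ) (hn : n = Fintype.card V) (hn1 : 1 ≤ n) (k : ℕ) (hk : 1 ≤ k) :
    (NF G : ℝ) - n / (k + 1) ≤ NC G k := by
  classical
  -- obtain a maximizing acyclic set S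
  have hne : (0 : ℕ) ∈ {m | ∃ S : Set V, m = S.ncard ∧ (G.induce S).IsAcyclic} := by
    refine ⟨∅, by simp, ?_⟩
    intro v _ _
    exact absurd v.2 (Set.notMem_empty _)
  have hbddF : BddAbove {m | ∃ S : Set V, m = S.ncard ∧ (G.induce S).IsAcyclic} := by
    refine ⟨Fintype.card V, fun m hm => ?_⟩
    obtain ⟨S, hmS, _⟩ := hm
    rw [hmS]
    exact le_trans (Set.ncard_le_ncard (Set.subset_univ S) (Set.toFinite _))
      (le_of_eq (by rw [Set.ncard_univ, Nat.card_eq_fintype_card]))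
  have hNFmem : NF G ∈ {m | ∃ S : Set V, m = S.ncard ∧ (G.induce S).IsAcyclic} :=
    Nat.sSup_mem ⟨0, hne⟩ hbddF
  obtain ⟨S, hSNF, hSac⟩ := hNFmem
  obtain ⟨T, hTS, hcard, hcomp⟩ := nc_nf_main G hSac k
  -- T witnesses membership in the NC set
  have hTmem : T.ncard ∈ {m | ∃ S : Set V, m = S.ncard ∧
      ∀ v : S, (((G.induce S).connectedComponentMk v).supp).ncard ≤ k} := ⟨T, rfl, hcomp⟩
  have hbddC : BddAbove {m | ∃ S : Set V, m = S.ncard ∧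
      ∀ v : S, (((G.induce S).connectedComponentMk v).supp).ncard ≤ k} := by
    refine ⟨Fintype.card V, fun m hm => ?_⟩
    obtain ⟨S, hmS, _⟩ := hm
    rw [hmS]
    exact le_trans (Set.ncard_le_ncard (Set.subset_univ S) (Set.toFinite _))
      (le_of_eq (by rw [Set.ncard_univ, Nat.card_eq_fintype_card]))
  have hNC : T.ncard ≤ NC G k := le_csSup hbddC hTmem
  -- arithmetic
  have hTle : T.ncard ≤ S.ncard := Set.ncard_le_ncard hTS (Set.toFinite _)
  have hsn : S.ncard ≤ n := by
    rw [hn]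
    exact le_trans (Set.ncard_le_ncard (Set.subset_univ S) (Set.toFinite _))
      (le_of_eq (by rw [Set.ncard_univ, Nat.card_eq_fintype_card]))
  have h1 : (k + 1) * (S.ncard - T.ncard) ≤ n := hcard.trans hsn
  have h1' : ((k : ℝ) + 1) * ((S.ncard : ℝ) - (T.ncard : ℝ)) ≤ (n : ℝ) := by
    have := (Nat.cast_le (α := ℝ)).mpr h1
    push_cast [Nat.cast_sub hTle] at this
    linarith
  have hk1pos : (0 : ℝ) < (k : ℝ) + 1 := by positivity
  have h2 : (S.ncard : ℝ) - (T.ncard : ℝ) ≤ (n : ℝ) / ((k : ℝ) + 1) := by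
    rw [le_div_iff₀ hk1pos]
    nlinarith
  have h3 : (T.ncard : ℝ) ≤ (NC G k : ℝ) := Nat.cast_le.mpr hNC
  have h4 : (NF G : ℝ) = (S.ncard : ℝ) := by exact_mod_cast congrArg Nat.cast hSNF
  rw [h4]
  push_cast
  linarith
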